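/- Let Ψ be the Barles–Soner function. Then Ψ(A)/A tends to 1 as A → +∞, and Ψ(A) tends to −1 as A → −∞. -/

import Mathlib

open Real Filter Set


/-- If `f a ≤ m` and `deriv f < 0` wherever `f > m` on `(a,b)`, then `f b ≤ m`. -/
lemma no_cross_up (f : ℝ → ℝ) (m a b : ℝ) (hab : a ≤ b)
    (hc : ContinuousOn f (Set.Icc a b))
    (ha : f a ≤ m)
    (hd : ∀ x ∈ Set.Ioo a b, m < f x → deriv f x < 0) :
    f b ≤ m := by
  by_contra hb
  push_neg at hb
  have hSclosed : IsClosed (Set.Icc a b ∩ f ⁻¹' Set.Iic m) :=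
    hc.preimage_isClosed_of_isClosed isClosed_Icc isClosed_Iic
  have hScomp : IsCompact (Set.Icc a b ∩ f ⁻¹' Set.Iic m) :=
    isCompact_Icc.of_isClosed_subset hSclosed inter_subset_left
  have hSne : (Set.Icc a b ∩ f ⁻¹' Set.Iic m).Nonempty := ⟨a, ⟨le_refl a, hab⟩, ha⟩
  obtain ⟨c, hceq⟩ : ∃ c, sSup (Set.Icc a b ∩ f ⁻¹' Set.Iic m) = c := ⟨_, rfl⟩
  have hcS : c ∈ Set.Icc a b ∩ f ⁻¹' Set.Iic m := hceq ▸ hScomp.sSup_mem hSne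
  obtain ⟨⟨hac, hcb⟩, hfc⟩ := hcS
  have hfcm : f c ≤ m := hfc
  have hcltb : c < b := lt_of_le_of_ne hcb (fun h => absurd (h ▸ hfcm) (not_le.2 hb))
  have hgt : ∀ x, c < x → x ≤ b → m < f x := by
    intro x hx1 hx2
    by_contra h
    push_neg at h
    have : x ≤ c := hceq ▸ le_csSup hScomp.bddAbove ⟨⟨le_trans hac hx1.le, hx2⟩, h⟩
    linarith
  have hanti : StrictAntiOn f (Set.Icc c b) := by
    apply strictAntiOn_of_deriv_neg (convex_Icc c b)
      (hc.mono (Set.Icc_subset_Icc hac le_rfl))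
    intro x hx
    rw [interior_Icc] at hx
    exact hd x ⟨lt_of_le_of_lt hac hx.1, hx.2⟩ (hgt x hx.1 hx.2.le)
  have := hanti (Set.left_mem_Icc.2 hcltb.le) (Set.right_mem_Icc.2 hcltb.le) hcltb
  linarith [hgt b hcltb le_rfl]

lemma no_cross_down (f : ℝ → ℝ) (m a b : ℝ) (hab : a ≤ b)
    (hc : ContinuousOn f (Set.Icc a b))
    (ha : m ≤ f a)
    (hd : ∀ x ∈ Set.Ioo a b, f x < m → 0 < deriv f x) :
    m ≤ f b := by
  have := no_cross_up (fun x => -f x) (-m) a b hab hc.neg (by simpa using ha) ?_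
  · simpa using this
  · intro x hx hfx
    rw [deriv.fun_neg]
    simp only [neg_lt_neg_iff] at hfx
    have := hd x hx (by linarith)
    linarith

/-- If `f a < m` and `deriv f < 0` wherever `f < m` on `(a,b)`, then `f b < m`. -/
lemma no_rise (f : ℝ → ℝ) (m a b : ℝ) (hab : a ≤ b)
    (hc : ContinuousOn f (Set.Icc a b))
    (ha : f a < m)
    (hd : ∀ x ∈ Set.Ioo a b, f x < m → deriv f x < 0) :
    f b < m := by
  by_contra hb
  push_neg at hb
  have hSclosed : IsClosed (Set.Icc a b ∩ f ⁻¹' Set.Ici m) :=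
    hc.preimage_isClosed_of_isClosed isClosed_Icc isClosed_Ici
  have hScomp : IsCompact (Set.Icc a b ∩ f ⁻¹' Set.Ici m) :=
    isCompact_Icc.of_isClosed_subset hSclosed inter_subset_left
  have hSne : (Set.Icc a b ∩ f ⁻¹' Set.Ici m).Nonempty := ⟨b, ⟨hab, le_refl b⟩, hb⟩
  obtain ⟨c, hceq⟩ : ∃ c, sInf (Set.Icc a b ∩ f ⁻¹' Set.Ici m) = c := ⟨_, rfl⟩
  have hcS : c ∈ Set.Icc a b ∩ f ⁻¹' Set.Ici m := hceq ▸ hScomp.sInf_mem hSne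
  obtain ⟨⟨hac, hcb⟩, hfc⟩ := hcS
  have hfcm : m ≤ f c := hfc
  have haltc : a < c := lt_of_le_of_ne hac (fun h => absurd (h ▸ hfcm) (not_le.2 ha))
  have hlt : ∀ x, a ≤ x → x < c → f x < m := by
    intro x hx1 hx2
    by_contra h
    push_neg at h
    have : c ≤ x := hceq ▸ csInf_le hScomp.bddBelow ⟨⟨hx1, le_trans hx2.le hcb⟩, h⟩
    linarith
  have hanti : StrictAntiOn f (Set.Icc a c) := by
    apply strictAntiOn_of_deriv_neg (convex_Icc a c)
      (hc.mono (Set.Icc_subset_Icc le_rfl hcb))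
    intro x hx
    rw [interior_Icc] at hx
    exact hd x ⟨hx.1, lt_of_lt_of_le hx.2 hcb⟩ (hlt x hx.1.le hx.2)
  have := hanti (Set.left_mem_Icc.2 haltc.le) (Set.right_mem_Icc.2 haltc.le) haltc
  linarith

/-- Log-comparison lemma: if `deriv f x ≥ c / x` on `(a,∞)`, `a > 0`, then
`f b ≥ f a + c * (log b - log a)` for `b ≥ a`. -/
lemma log_comp (f : ℝ → ℝ) (a c : ℝ) (ha : 0 < a)
    (hf : ContinuousOn f (Set.Ici a))
    (hd : ∀ x ∈ Set.Ioi a, DifferentiableAt ℝ f x)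
    (hd' : ∀ x ∈ Set.Ioi a, c / x ≤ deriv f x) :
    ∀ b, a ≤ b → f a + c * (Real.log b - Real.log a) ≤ f b := by
  intro b hb
  have hlogd : ∀ x ∈ Set.Ioi a, HasDerivAt (fun y => c * Real.log y) (c / x) x := by
    intro x hx
    have hx0 : x ≠ 0 := ne_of_gt (lt_trans ha hx)
    simpa [div_eq_mul_inv, mul_comm] using (Real.hasDerivAt_log hx0).const_mul c
  have hmono : MonotoneOn (fun x => f x - c * Real.log x) (Set.Ici a) := by
    apply monotoneOn_of_deriv_nonneg (convex_Ici a)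
    · apply hf.sub
      apply ContinuousOn.mul continuousOn_const
      exact Real.continuousOn_log.mono (fun x hx => ne_of_gt (lt_of_lt_of_le ha hx))
    · intro x hx
      rw [interior_Ici] at hx
      exact ((hd x hx).sub (hlogd x hx).differentiableAt).differentiableWithinAt
    · intro x hx
      rw [interior_Ici] at hx
      have : deriv (fun x => f x - c * Real.log x) x = deriv f x - c / x := by
        rw [deriv_fun_sub (hd x hx) (hlogd x hx).differentiableAt, (hlogd x hx).deriv]
      rw [this]
      linarith [hd' x hx]
  have := hmono (Set.self_mem_Ici) (show b ∈ Set.Ici a from hb) hb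
  simp only at this
  linarith

set_option maxHeartbeats 1000000 in
lemma neg_side (Ψ : ℝ → ℝ)
    (hcont : Continuous Ψ)
    (h0 : Ψ 0 = 0)
    (hdiff : ∀ A : ℝ, A ≠ 0 → DifferentiableAt ℝ Ψ A)
    (hprod : ∀ A : ℝ, A ≠ 0 → 0 ≤ A * Ψ A)
    (hode : ∀ A : ℝ, A ≠ 0 →
      deriv Ψ A = (Ψ A + 1) / (2 * Real.sqrt (A * Ψ A) - A)) :
    Tendsto Ψ atBot (nhds (-1)) := by
  have hpsiNonpos : ∀ A : ℝ, A < 0 → Ψ A ≤ 0 := by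
    intro A hA
    nlinarith [hprod A (ne_of_lt hA)]
  have hD : ∀ A : ℝ, A < 0 → 0 < 2 * Real.sqrt (A * Ψ A) - A := by
    intro A hA
    have := Real.sqrt_nonneg (A * Ψ A)
    linarith
  -- Ψ ≥ -1 on negatives
  have hge : ∀ A : ℝ, A < 0 → -1 ≤ Ψ A := by
    intro a ha
    by_contra hlt
    push_neg at hlt
    obtain ⟨δ, hδ, hδ'⟩ := Metric.continuousAt_iff.1 (hcont.continuousAt (x := 0)) 1 one_pos
    have hΨb : ∀ x : ℝ, |x| < δ → |Ψ x| < 1 := by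
      intro x hx
      have := hδ' (show dist x 0 < δ by simpa [Real.dist_eq] using hx)
      simpa [Real.dist_eq, h0] using this
    have haδ : a ≤ -δ := by
      by_contra h
      push_neg at h
      have := hΨb a (by rw [abs_of_neg ha]; linarith)
      have := abs_lt.1 this
      linarith
    have hb : Ψ (-(δ/2)) < -1 := by
      apply no_rise Ψ (-1) a (-(δ/2)) (by linarith) hcont.continuousOn hlt
      intro x hx hxlt
      have hx0 : x < 0 := lt_of_le_of_lt hx.2.le (by linarith)
      rw [hode x (ne_of_lt hx0)]
      exact div_neg_of_neg_of_pos (by linarith) (hD x hx0)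
    have := abs_lt.1 (hΨb (-(δ/2)) (by rw [abs_of_neg (by linarith)]; linarith))
    linarith
  -- Ψ monotone on Iic (-1)
  have hmono : MonotoneOn Ψ (Set.Iic (-1 : ℝ)) := by
    apply monotoneOn_of_deriv_nonneg (convex_Iic _) hcont.continuousOn
    · intro x hx
      rw [interior_Iic] at hx
      have hx0 : x < 0 := lt_trans hx (by norm_num)
      exact (hdiff x (ne_of_lt hx0)).differentiableWithinAt
    · intro x hx
      rw [interior_Iic] at hx
      have hx0 : x < 0 := lt_trans hx (by norm_num)
      rw [hode x (ne_of_lt hx0)]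
      exact div_nonneg (by linarith [hge x hx0]) (hD x hx0).le
  set g : ℝ → ℝ := fun x => Ψ (min x (-1)) with hg
  have hgmono : Monotone g := by
    intro x y hxy
    exact hmono (by simp) (by simp) (min_le_min hxy le_rfl)
  have hgband : ∀ x : ℝ, -1 ≤ g x := by
    intro x
    exact hge _ (lt_of_le_of_lt (min_le_right _ _) (by norm_num))
  have hbdd : BddBelow (Set.range g) := ⟨-1, by rintro _ ⟨x, rfl⟩; exact hgband x⟩
  have hlim : Tendsto g atBot (nhds (⨅ x, g x)) := tendsto_atBot_ciInf hgmono hbdd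
  have hL1 : -1 ≤ ⨅ x, g x := le_ciInf hgband
  have hLle : ∀ x : ℝ, x ≤ -1 → (⨅ x, g x) ≤ Ψ x := by
    intro x hx
    have h := ciInf_le hbdd x
    have hgx : g x = Ψ x := by show Ψ (min x (-1)) = Ψ x; rw [min_eq_left hx]
    rwa [hgx] at h
  have hLeq : (⨅ x, g x) = -1 := by
    by_contra hne'
    have hL : -1 < ⨅ x, g x := lt_of_le_of_ne hL1 (Ne.symm hne')
    set L := ⨅ x, g x with hLdef
    have hL1pos : 0 < L + 1 := by linarith
    -- comparison function F
    set F : ℝ → ℝ := fun x => Ψ x + ((L+1)/3) * Real.log (-x) with hF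
    have hFd : ∀ x : ℝ, x < -1 → HasDerivAt (fun y => ((L+1)/3) * Real.log (-y))
        (((L+1)/3) * x⁻¹) x := by
      intro x hx
      have hx0 : -x ≠ 0 := by intro h; nlinarith [neg_eq_zero.1 h]
      have h1 : HasDerivAt (fun y : ℝ => Real.log (-y)) ((-x)⁻¹ * (-1)) x :=
        (Real.hasDerivAt_log hx0).comp x (hasDerivAt_neg x)
      have h2 : ((-x)⁻¹ * (-1)) = x⁻¹ := by
        field_simp
      rw [h2] at h1
      exact h1.const_mul _
    have hFmono : MonotoneOn F (Set.Iic (-1 : ℝ)) := by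
      apply monotoneOn_of_deriv_nonneg (convex_Iic _)
      · apply hcont.continuousOn.add
        apply ContinuousOn.mul continuousOn_const
        apply ContinuousOn.comp Real.continuousOn_log continuous_neg.continuousOn
        intro x hx
        simp only [Set.mem_Iic] at hx
        simp only [Set.mem_compl_iff, Set.mem_singleton_iff]
        intro h
        nlinarith [neg_eq_zero.1 h]
      · intro x hx
        rw [interior_Iic] at hx
        exact ((hdiff x (by intro h; rw [h] at hx; norm_num at hx)).add
          (hFd x hx).differentiableAt).differentiableWithinAt
      · intro x hx
        rw [interior_Iic] at hx
        have hx' : x < -1 := hx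
        have hx0 : x < 0 := lt_trans hx (by norm_num)
        have hder : deriv F x = deriv Ψ x + ((L+1)/3) * x⁻¹ := by
          rw [hF]
          rw [deriv_fun_add (hdiff x (ne_of_lt hx0)) (hFd x hx).differentiableAt, (hFd x hx).deriv]
        rw [hder, hode x (ne_of_lt hx0)]
        -- bound: D ≤ -3x
        have hΨx := hge x hx0
        have hΨx' := hpsiNonpos x hx0
        have hs1 : Real.sqrt (x * Ψ x) ≤ Real.sqrt (-x) := by
          apply Real.sqrt_le_sqrt; nlinarith
        have hs2 : Real.sqrt (-x) ≤ -x := by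
          have h1 : (1:ℝ) ≤ -x := by linarith
          calc Real.sqrt (-x) ≤ Real.sqrt ((-x)^2) := Real.sqrt_le_sqrt (by nlinarith)
            _ = -x := Real.sqrt_sq (by linarith)
        have hDle : 2 * Real.sqrt (x * Ψ x) - x ≤ -3*x := by linarith
        have hDpos := hD x hx0
        have hkey : (L+1)/(-3*x) ≤ (Ψ x + 1)/(2 * Real.sqrt (x * Ψ x) - x) := by
          rw [div_le_div_iff₀ (by linarith) hDpos]
          have hLx := hLle x (by linarith)
          nlinarith [mul_le_mul_of_nonneg_left hDle (show (0:ℝ) ≤ Ψ x + 1 by linarith),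
            mul_le_mul_of_nonneg_right (show L + 1 ≤ Ψ x + 1 by linarith) hDpos.le]
        have heq : ((L+1)/3) * x⁻¹ = -((L+1)/(-3*x)) := by
          field_simp
        rw [heq]
        linarith
    -- contradiction by choosing x very negative
    set x₀ : ℝ := -Real.exp (3*(Ψ (-1) + 2)/(L+1)) with hx₀
    have hΨm1 : -1 ≤ Ψ (-1) := hge (-1) (by norm_num)
    have hargpos : 0 ≤ 3*(Ψ (-1) + 2)/(L+1) :=
      div_nonneg (by nlinarith) hL1pos.le
    have hx₀le : x₀ ≤ -1 := by
      have := Real.one_le_exp hargpos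
      rw [hx₀]; linarith
    have hFle := hFmono (show x₀ ∈ Set.Iic (-1:ℝ) from hx₀le) (by simp) hx₀le
    have hFm1 : F (-1) = Ψ (-1) := by
      rw [hF]; norm_num
    have hlogx₀ : Real.log (-x₀) = 3*(Ψ (-1) + 2)/(L+1) := by
      rw [hx₀, neg_neg, Real.log_exp]
    have hFx₀ : F x₀ = Ψ x₀ + (Ψ (-1) + 2) := by
      show Ψ x₀ + ((L+1)/3) * Real.log (-x₀) = _
      rw [hlogx₀]
      field_simp
    rw [hFm1, hFx₀] at hFle
    have : Ψ x₀ ≤ -2 := by linarith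
    have hx₀0 : x₀ < 0 := by linarith
    linarith [hge x₀ hx₀0]
  rw [hLeq] at hlim
  apply hlim.congr'
  filter_upwards [eventually_le_atBot (-1 : ℝ)] with x hx
  show Ψ (min x (-1)) = Ψ x
  rw [min_eq_left hx]

set_option maxHeartbeats 2000000 in
lemma pos_side (Ψ : ℝ → ℝ)
    (hcont : Continuous Ψ)
    (h0 : Ψ 0 = 0)
    (hdiff : ∀ A : ℝ, A ≠ 0 → DifferentiableAt ℝ Ψ A)
    (hprod : ∀ A : ℝ, A ≠ 0 → 0 ≤ A * Ψ A)
    (hne : ∀ A : ℝ, A ≠ 0 → 2 * Real.sqrt (A * Ψ A) ≠ A)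
    (hode : ∀ A : ℝ, A ≠ 0 →
      deriv Ψ A = (Ψ A + 1) / (2 * Real.sqrt (A * Ψ A) - A)) :
    Tendsto (fun A => Ψ A / A) atTop (nhds 1) := by
  obtain ⟨u, hu⟩ : ∃ u : ℝ → ℝ, u = fun A => Ψ A / A := ⟨_, rfl⟩
  rw [← hu]
  have hP1 : ∀ A : ℝ, 0 < A → 0 ≤ Ψ A := by
    intro A hA
    nlinarith [hprod A (ne_of_gt hA)]
  have hDcont : Continuous (fun A : ℝ => 2 * Real.sqrt (A * Ψ A) - A) := by
    apply Continuous.sub _ continuous_id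
    exact continuous_const.mul (Real.continuous_sqrt.comp (continuous_id.mul hcont))
  -- the denominator is (strictly) positive on (0, ∞)
  have hDpos : ∀ A : ℝ, 0 < A → 0 < 2 * Real.sqrt (A * Ψ A) - A := by
    intro A hA
    rcases lt_or_gt_of_ne (sub_ne_zero.2 (hne A (ne_of_gt hA))) with hneg | hpos
    swap; · exact hpos
    exfalso
    have hall : ∀ x : ℝ, 0 < x → 2 * Real.sqrt (x * Ψ x) - x < 0 := by
      intro x hx
      rcases lt_or_gt_of_ne (sub_ne_zero.2 (hne x (ne_of_gt hx))) with h | h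
      · exact h
      exfalso
      rcases le_total A x with hAx | hxA
      · obtain ⟨y, hy, hy0⟩ := intermediate_value_Icc hAx hDcont.continuousOn
          (show (0:ℝ) ∈ Set.Icc _ _ from ⟨hneg.le, h.le⟩)
        exact hne y (ne_of_gt (lt_of_lt_of_le hA hy.1)) (by linarith [sub_eq_zero.1 hy0])
      · obtain ⟨y, hy, hy0⟩ := intermediate_value_Icc' hxA hDcont.continuousOn
          (show (0:ℝ) ∈ Set.Icc _ _ from ⟨hneg.le, h.le⟩)
        exact hne y (ne_of_gt (lt_of_lt_of_le hx hy.1)) (by linarith [sub_eq_zero.1 hy0])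
    have hanti : StrictAntiOn Ψ (Set.Ici (0:ℝ)) := by
      apply strictAntiOn_of_deriv_neg (convex_Ici _) hcont.continuousOn
      intro x hx
      rw [interior_Ici] at hx
      rw [hode x (ne_of_gt hx)]
      exact div_neg_of_pos_of_neg (by linarith [hP1 x hx]) (hall x hx)
    have := hanti (Set.self_mem_Ici) (show (1:ℝ) ∈ Set.Ici (0:ℝ) by norm_num) one_pos
    rw [h0] at this
    linarith [hP1 1 one_pos]
  -- u > 1/4
  have hquarter : ∀ A : ℝ, 0 < A → 1/4 < u A := by
    intro A hA
    have hs := hDpos A hA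
    have hsq : Real.sqrt (A * Ψ A) ^ 2 = A * Ψ A := Real.sq_sqrt (hprod A (ne_of_gt hA))
    have h2 : A^2 < 4 * (A * Ψ A) := by nlinarith [Real.sqrt_nonneg (A * Ψ A)]
    rw [hu]
    show 1/4 < Ψ A / A
    rw [lt_div_iff₀ hA]
    nlinarith
  have hu0 : ∀ A : ℝ, 0 < A → 0 ≤ u A := fun A hA => by linarith [hquarter A hA]
  have hrhalf : ∀ A : ℝ, 0 < A → 1/2 < Real.sqrt (u A) := by
    intro A hA
    exact (Real.lt_sqrt (by norm_num)).2 (by nlinarith [hquarter A hA])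
  have hud : ∀ A : ℝ, 0 < A → DifferentiableAt ℝ u A := by
    intro A hA
    rw [hu]
    exact (hdiff A (ne_of_gt hA)).div differentiableAt_fun_id (ne_of_gt hA)
  have hucont : ∀ s : Set ℝ, (∀ x ∈ s, x ≠ 0) → ContinuousOn u s := by
    intro s hs
    rw [hu]
    exact ContinuousOn.div hcont.continuousOn continuousOn_id hs
  -- the master derivative formula
  have humain : ∀ A : ℝ, 0 < A → deriv u A =
      (1 + 2*A*(u A)*(1 - Real.sqrt (u A))) / (A^2*(2*Real.sqrt (u A) - 1)) := by
    intro A hA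
    have hAne : A ≠ 0 := ne_of_gt hA
    have hdd : deriv u A = (deriv Ψ A * A - Ψ A * 1) / A ^ 2 := by
      rw [hu]
      rw [deriv_fun_div (c := Ψ) (d := fun x : ℝ => x) (hdiff A hAne) differentiableAt_fun_id hAne]
      simp
    have hsqrtu : Real.sqrt (A * Ψ A) = A * Real.sqrt (u A) := by
      have h1 : A * Ψ A = A^2 * (u A) := by
        rw [hu]
        show A * Ψ A = A ^ 2 * (Ψ A / A)
        field_simp
      rw [h1, Real.sqrt_mul (sq_nonneg A), Real.sqrt_sq hA.le]
    have hΨA : Ψ A = A * u A := by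
      rw [hu]
      show Ψ A = A * (Ψ A / A)
      rw [mul_comm]
      exact (div_mul_cancel₀ _ hAne).symm
    have hr2 : Real.sqrt (u A) ^ 2 = u A := Real.sq_sqrt (hu0 A hA)
    have hrne : 2 * Real.sqrt (u A) - 1 ≠ 0 := by
      have := hrhalf A hA; intro h; nlinarith
    rw [hdd, hode A hAne, hsqrtu]
    obtain ⟨r, hrdef⟩ : ∃ r, Real.sqrt (u A) = r := ⟨_, rfl⟩
    rw [hrdef] at hr2 hrne ⊢
    rw [hΨA, ← hr2]
    have hden : 2 * (A * r) - A ≠ 0 := by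
      intro h
      apply hrne
      have h2 : A * (2*r-1) = A * 0 := by linear_combination h
      exact mul_left_cancel₀ hAne h2
    rw [show 2 * (A * r) - A = A * (2 * r - 1) by ring]
    have hrne' : -1 + r * 2 ≠ 0 := by intro h; apply hrne; linarith
    have ht : (-1 + r * 2)⁻¹ * (-1 + r * 2) = 1 := inv_mul_cancel₀ hrne'
    field_simp
    linear_combination (A * r ^ 2) * ht
  -- sign lemma: below 1 the derivative is positive
  have hS1 : ∀ A : ℝ, 0 < A → u A < 1 → 0 < deriv u A := by
    intro A hA h1
    rw [humain A hA]
    apply div_pos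
    · have hrlt : Real.sqrt (u A) < 1 := by
        rw [Real.sqrt_lt' one_pos]; nlinarith
      nlinarith [hu0 A hA, mul_nonneg (mul_nonneg (by linarith : (0:ℝ) ≤ 2*A) (hu0 A hA))
        (by linarith : (0:ℝ) ≤ 1 - Real.sqrt (u A))]
    · have := hrhalf A hA
      have hA2 : 0 < A^2 := by positivity
      nlinarith
  -- Claim U : eventually u ≤ 1 + ε
  have claimU : ∀ ε : ℝ, 0 < ε → ∃ A₁ : ℝ, 0 < A₁ ∧ ∀ A, A₁ ≤ A → u A ≤ 1 + ε := by
    intro ε hε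
    have hs1 : 1 < Real.sqrt (1+ε) := (Real.lt_sqrt (by norm_num)).2 (by nlinarith)
    obtain ⟨c₀, hc₀⟩ : ∃ c₀ : ℝ, c₀ = (1+ε)*(Real.sqrt (1+ε)-1) := ⟨_, rfl⟩
    have hc₀pos : 0 < c₀ := by rw [hc₀]; apply mul_pos <;> nlinarith
    obtain ⟨A₀, hA₀⟩ : ∃ A₀ : ℝ, A₀ = 1/c₀ + 1 := ⟨_, rfl⟩
    have hA₀pos : 0 < A₀ := by
      rw [hA₀]
      have := one_div_pos.mpr hc₀pos
      linarith
    have hA₀c₀ : 1 ≤ A₀ * c₀ := by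
      have h1 : (1/c₀) * c₀ = 1 := div_mul_cancel₀ _ (ne_of_gt hc₀pos)
      rw [hA₀]
      nlinarith
    -- derivative negative above level 1+ε when A ≥ A₀
    have hderneg : ∀ x : ℝ, A₀ ≤ x → 1 + ε ≤ u x → deriv u x < 0 := by
      intro x hx hux
      have hx0 : 0 < x := lt_of_lt_of_le hA₀pos hx
      rw [humain x hx0]
      have hrge : Real.sqrt (1+ε) ≤ Real.sqrt (u x) := Real.sqrt_le_sqrt hux
      have hprod2 : c₀ ≤ u x * (Real.sqrt (u x) - 1) := by
        rw [hc₀]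
        apply mul_le_mul hux (by linarith) (by linarith) (by nlinarith)
      have hxc₀ : 1 ≤ x * c₀ := le_trans hA₀c₀ (by nlinarith)
      apply div_neg_of_neg_of_pos
      · nlinarith [mul_le_mul_of_nonneg_left hprod2 (by linarith : (0:ℝ) ≤ 2*x)]
      · have hx2 : 0 < x^2 := by positivity
        nlinarith
    obtain ⟨A₁, hA₁ge, hA₁⟩ : ∃ A₁ : ℝ, A₀ ≤ A₁ ∧ u A₁ ≤ 1 + ε := by
      by_contra hcon
      push_neg at hcon
      -- u > 1+ε on [A₀, ∞), so u is bounded by M := u A₀ and decreasing fast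
      obtain ⟨M, hM⟩ : ∃ M : ℝ, M = u A₀ := ⟨_, rfl⟩
      have hMgt : 1 + ε < M := hM ▸ hcon A₀ le_rfl
      have hbndM : ∀ x : ℝ, A₀ ≤ x → u x ≤ M := by
        intro x hx
        apply no_cross_up u M A₀ x hx
          (hucont _ (fun y hy => ne_of_gt (lt_of_lt_of_le hA₀pos hy.1))) (le_of_eq hM.symm)
        intro y hy _
        exact hderneg y hy.1.le ((hcon y hy.1.le).le)
      have hsMge : Real.sqrt (1+ε) ≤ Real.sqrt M := Real.sqrt_le_sqrt (by linarith)
      obtain ⟨c₁, hc₁⟩ : ∃ c₁ : ℝ, c₁ = c₀ / (2*Real.sqrt M - 1) := ⟨_, rfl⟩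
      have h2sM : 0 < 2*Real.sqrt M - 1 := by nlinarith
      have hc₁pos : 0 < c₁ := by rw [hc₁]; exact div_pos hc₀pos h2sM
      have hquant : ∀ x ∈ Set.Ioi A₀, c₁ / x ≤ deriv (fun y => -u y) x := by
        intro x hx
        rw [Set.mem_Ioi] at hx
        have hx0 : 0 < x := lt_trans hA₀pos hx
        rw [deriv.fun_neg]
        have hux := hcon x hx.le
        have huxM := hbndM x hx.le
        have hr : Real.sqrt (u x) ≤ Real.sqrt M := Real.sqrt_le_sqrt huxM
        have hrge : Real.sqrt (1+ε) ≤ Real.sqrt (u x) := Real.sqrt_le_sqrt (by linarith)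
        rw [humain x hx0]
        rw [le_neg, div_le_iff₀ (by nlinarith : (0:ℝ) < x^2*(2*Real.sqrt (u x) - 1))]
        have hprod2 : c₀ ≤ u x * (Real.sqrt (u x) - 1) := by
          rw [hc₀]
          apply mul_le_mul hux.le (by linarith) (by linarith) (by nlinarith)
        have hxc₀ : 1 ≤ x * c₀ := le_trans hA₀c₀ (by nlinarith)
        have hnum : 1 + 2*x*(u x)*(1 - Real.sqrt (u x)) ≤ -(x*c₀) := by
          nlinarith [mul_le_mul_of_nonneg_left hprod2 (by linarith : (0:ℝ) ≤ 2*x)]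
        have hkey : c₁ * (2*Real.sqrt (u x)-1) ≤ c₀ := by
          rw [hc₁, div_mul_eq_mul_div, div_le_iff₀ h2sM]
          nlinarith
        have hrhs : -(x*c₀) ≤ (-(c₁/x)) * (x^2*(2*Real.sqrt (u x)-1)) := by
          obtain ⟨r, hrdef⟩ : ∃ r, Real.sqrt (u x) = r := ⟨_, rfl⟩
          rw [hrdef] at hkey ⊢
          have heq2 : (-(c₁/x)) * (x^2*(2*r-1)) = -(x * (c₁*(2*r-1))) := by
            field_simp
          rw [heq2]
          have h4 := mul_le_mul_of_nonneg_left hkey hx0.le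
          linarith
        linarith
      have hcontn : ContinuousOn (fun y => -u y) (Set.Ici A₀) :=
        (hucont _ (fun y hy => ne_of_gt (lt_of_lt_of_le hA₀pos hy))).neg
      have hdn : ∀ x ∈ Set.Ioi A₀, DifferentiableAt ℝ (fun y => -u y) x :=
        fun x hx => (hud x (lt_trans hA₀pos hx)).neg
      have hlc := log_comp (fun y => -u y) A₀ c₁ hA₀pos hcontn hdn hquant
      obtain ⟨b, hb⟩ : ∃ b : ℝ, b = A₀ * Real.exp ((M+1)/c₁) := ⟨_, rfl⟩
      have hbge : A₀ ≤ b := by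
        have h1 : (1:ℝ) ≤ Real.exp ((M+1)/c₁) :=
          Real.one_le_exp (div_nonneg (by linarith) hc₁pos.le)
        obtain ⟨E, hE⟩ : ∃ E : ℝ, Real.exp ((M+1)/c₁) = E := ⟨_, rfl⟩
        rw [hE] at h1
        rw [hb, hE]
        nlinarith
      have hble := hlc b hbge
      have hlogb : Real.log b = Real.log A₀ + (M+1)/c₁ := by
        rw [hb, Real.log_mul (ne_of_gt hA₀pos) (Real.exp_ne_zero _), Real.log_exp]
      rw [hlogb] at hble
      have heq : c₁ * (Real.log A₀ + (M+1)/c₁ - Real.log A₀) = M + 1 := by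
        field_simp
        ring
      rw [heq] at hble
      -- hble : -u A₀ + (M+1) ≤ -u b
      have hub : u b ≤ -1 := by
        have hMA₀ : M = u A₀ := hM
        linarith
      linarith [hcon b hbge]
    refine ⟨A₁, lt_of_lt_of_le hA₀pos hA₁ge, ?_⟩
    intro A hA
    apply no_cross_up u (1+ε) A₁ A hA
      (hucont _ (fun y hy => ne_of_gt (lt_of_lt_of_le (lt_of_lt_of_le hA₀pos hA₁ge) hy.1))) hA₁
    intro x hx hux
    exact hderneg x (le_trans hA₁ge hx.1.le) hux.le
  -- Claim L : eventually u ≥ 1 - ε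
  have claimL : ∀ ε : ℝ, 0 < ε → ε < 1 → ∃ A₁ : ℝ, 0 < A₁ ∧ ∀ A, A₁ ≤ A → 1 - ε ≤ u A := by
    intro ε hε hε1
    obtain ⟨d, hd⟩ : ∃ d : ℝ, d = 1 - Real.sqrt (1-ε) := ⟨_, rfl⟩
    have hdpos : 0 < d := by
      rw [hd]
      have : Real.sqrt (1-ε) < 1 := by
        rw [Real.sqrt_lt' one_pos]; nlinarith
      linarith
    have hdle : d ≤ 1 := by
      rw [hd]; have := Real.sqrt_nonneg (1-ε); linarith
    obtain ⟨A₁, hA₁ge, hA₁⟩ : ∃ A₁ : ℝ, 1 ≤ A₁ ∧ 1 - ε ≤ u A₁ := by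
      by_contra hcon
      push_neg at hcon
      have hquant : ∀ x ∈ Set.Ioi (1:ℝ), (d/2) / x ≤ deriv u x := by
        intro x hx
        rw [Set.mem_Ioi] at hx
        have hx0 : 0 < x := lt_trans one_pos hx
        have hux := hcon x hx.le
        have hq := hquarter x hx0
        have hrle : Real.sqrt (u x) ≤ Real.sqrt (1-ε) := Real.sqrt_le_sqrt (by linarith)
        have hrh := hrhalf x hx0
        have hsle1 : Real.sqrt (1-ε) ≤ 1 := by
          have h := Real.sqrt_le_sqrt (show (1:ℝ)-ε ≤ 1 by linarith)
          rwa [Real.sqrt_one] at h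
        have h1r : d ≤ 1 - Real.sqrt (u x) := by rw [hd]; linarith
        rw [humain x hx0]
        obtain ⟨v, hvdef⟩ : ∃ v, u x = v := ⟨_, rfl⟩
        rw [hvdef] at hux hq h1r hrle hrh ⊢
        obtain ⟨r, hrdef⟩ : ∃ r, Real.sqrt v = r := ⟨_, rfl⟩
        rw [hrdef] at h1r hrle hrh ⊢
        have hx2 : (0:ℝ) < x^2 := by positivity
        rw [div_le_div_iff₀ hx0 (by nlinarith)]
        have h5 : (d/2)*(x^2*(2*r-1)) ≤ (d/2)*x^2 :=
          le_trans (le_of_eq (by ring))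
            (mul_le_mul_of_nonneg_left (by nlinarith : x^2*(2*r-1) ≤ x^2) (by positivity))
        have h6 : (1/4)*d ≤ v*(1-r) :=
          mul_le_mul hq.le h1r hdpos.le (by linarith)
        have h7 := mul_le_mul_of_nonneg_left h6 (by positivity : (0:ℝ) ≤ 2*x^2)
        nlinarith
      have hlc := log_comp u 1 (d/2) one_pos
        (hucont _ (fun y hy => ne_of_gt (lt_of_lt_of_le one_pos hy)))
        (fun x hx => hud x (lt_trans one_pos hx)) hquant
      obtain ⟨b, hb⟩ : ∃ b : ℝ, b = Real.exp (2/d) := ⟨_, rfl⟩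
      have hbge : (1:ℝ) ≤ b := by
        rw [hb]; exact Real.one_le_exp (by positivity)
      have hble := hlc b hbge
      have hlogb : Real.log b = 2/d := by rw [hb, Real.log_exp]
      rw [hlogb, Real.log_one] at hble
      have hq1 := hquarter 1 one_pos
      have heq : (d/2) * (2/d - 0) = 1 := by field_simp; ring
      rw [heq] at hble
      have := hcon b hbge
      linarith
    refine ⟨A₁, lt_of_lt_of_le one_pos hA₁ge, ?_⟩
    intro A hA
    apply no_cross_down u (1-ε) A₁ A hA
      (hucont _ (fun y hy => ne_of_gt (lt_of_lt_of_le (lt_of_lt_of_le one_pos hA₁ge) hy.1))) hA₁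
    intro x hx hux
    exact hS1 x (by have := hx.1; linarith) (by linarith)
  -- conclude
  apply tendsto_order.2
  constructor
  · intro b hb
    have hε : 0 < min ((1-b)/2) (1/2) := by
      apply lt_min <;> linarith
    have hε1 : min ((1-b)/2) (1/2) < 1 := lt_of_le_of_lt (min_le_right _ _) (by norm_num)
    obtain ⟨A₁, hA₁pos, hA₁⟩ := claimL _ hε hε1
    filter_upwards [eventually_ge_atTop A₁] with A hA
    have := hA₁ A hA
    have h1 := min_le_left ((1-b)/2) (1/2)
    linarith
  · intro b hb
    obtain ⟨A₁, hA₁pos, hA₁⟩ := claimU ((b-1)/2) (by linarith)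
    filter_upwards [eventually_ge_atTop A₁] with A hA
    have := hA₁ A hA
    linarith

/-- For the Barles–Soner function Ψ, Ψ(A)/A → 1 as A → +∞ and
Ψ(A) → −1 as A → −∞. -/
theorem stmt_0 (Ψ : ℝ → ℝ)
    (hcont : Continuous Ψ)
    (h0 : Ψ 0 = 0)
    (hdiff : ∀ A : ℝ, A ≠ 0 → DifferentiableAt ℝ Ψ A)
    (hprod : ∀ A : ℝ, A ≠ 0 → 0 ≤ A * Ψ A)
    (hne : ∀ A : ℝ, A ≠ 0 → 2 * Real.sqrt (A * Ψ A) ≠ A)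
    (hode : ∀ A : ℝ, A ≠ 0 →
      deriv Ψ A = (Ψ A + 1) / (2 * Real.sqrt (A * Ψ A) - A)) :
    Tendsto (fun A => Ψ A / A) atTop (nhds 1) ∧
    Tendsto Ψ atBot (nhds (-1)) :=
  ⟨pos_side Ψ hcont h0 hdiff hprod hne hode,
   neg_side Ψ hcont h0 hdiff hprod hode⟩
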